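/- Let N ≥ 1, ℓ > -1, ξ : [0,∞) → ℝ be C² with ξ'(0)=0, and g nonincreasing with Δξ(r) ≥ r^ℓ g(r) for all r > 0, where Δξ = ξ'' + (N-1)ξ'/r. Then ξ(r) ≥ ξ(0) + r^{ℓ+2} g(r) / ((N+ℓ)(ℓ+2)) for all r ≥ 0. -/

import Mathlib

open Real

/-- The radial Laplacian on `ℝ^N`: `Δξ(r) = ξ''(r) + (N-1) ξ'(r) / r`. -/
noncomputable def radLap (N : ℕ) (ξ : ℝ → ℝ) (r : ℝ) : ℝ :=
  deriv (deriv ξ) r + ((N : ℝ) - 1) / r * deriv ξ r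

lemma aux_pow_sub (m : ℕ) (s : ℝ) (hs : s ≠ 0) :
    (m : ℝ) * s ^ (m - 1) = (m : ℝ) * s ^ m / s := by
  cases m with
  | zero => simp
  | succ k =>
    rw [Nat.add_sub_cancel, pow_succ]
    field_simp

theorem stmt5 (N : ℕ) (hN : 1 ≤ N) (l : ℝ) (hl : -1 < l) (ξ g : ℝ → ℝ)
    (hξ : ContDiff ℝ 2 ξ) (hξ0 : deriv ξ 0 = 0)
    (hg : AntitoneOn g (Set.Ici 0))
    (h : ∀ r > (0 : ℝ), radLap N ξ r ≥ r ^ l * g r) :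
    ∀ r ≥ (0 : ℝ), ξ r ≥ ξ 0 + r ^ (l + 2) * g r / (((N : ℝ) + l) * (l + 2)) := by
  have hl2 : (0:ℝ) < l + 2 := by linarith
  intro r₀ hr₀
  rcases eq_or_lt_of_le hr₀ with h0 | h0
  · rw [← h0, Real.zero_rpow (by positivity)]
    simp
  have hN1 : (1:ℝ) ≤ N := by exact_mod_cast hN
  have hNl : (0:ℝ) < (N:ℝ) + l := by linarith
  set a := g r₀ with ha
  set c := a / (((N:ℝ) + l) * (l + 2)) with hc
  have hca : c * ((l + 2) * ((N:ℝ) + l)) = a := by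
    rw [hc]; field_simp
  have hd1 : Differentiable ℝ ξ := hξ.differentiable (by norm_num)
  have hξ' : ContDiff ℝ 1 (deriv ξ) :=
    (contDiff_succ_iff_deriv.mp (by exact_mod_cast hξ)).2.2
  have hd2 : Differentiable ℝ (deriv ξ) := hξ'.differentiable (by norm_num)
  set F : ℝ → ℝ := fun s => s ^ (N - 1) * (deriv ξ s - c * (l + 2) * s ^ (l + 1)) with hF
  set D : ℝ → ℝ := fun s =>
    ((N - 1 : ℕ) : ℝ) * s ^ (N - 1 - 1) * (deriv ξ s - c * (l + 2) * s ^ (l + 1))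
      + s ^ (N - 1) * (deriv (deriv ξ) s - c * (l + 2) * ((l + 1) * s ^ (l + 1 - 1))) with hD
  have hFd : ∀ s ∈ Set.Ioi (0:ℝ), HasDerivAt F (D s) s := by
    intro s hs
    have hpow : HasDerivAt (fun s : ℝ => s ^ (N - 1))
        (((N - 1 : ℕ) : ℝ) * s ^ (N - 1 - 1)) s := hasDerivAt_pow (N - 1) s
    have hrpow : HasDerivAt (fun s : ℝ => s ^ (l + 1)) ((l + 1) * s ^ (l + 1 - 1)) s :=
      Real.hasDerivAt_rpow_const (Or.inl (ne_of_gt hs))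
    have hξd : HasDerivAt (deriv ξ) (deriv (deriv ξ) s) s := (hd2 s).hasDerivAt
    exact hpow.mul (hξd.sub (hrpow.const_mul (c * (l + 2))))
  have hDeq : ∀ s : ℝ, 0 < s →
      D s = s ^ (N - 1) * (radLap N ξ s - s ^ l * a) := by
    intro s hs
    have hsne : s ≠ 0 := ne_of_gt hs
    have hcast : ((N - 1 : ℕ) : ℝ) = (N : ℝ) - 1 := by
      rw [Nat.cast_sub hN, Nat.cast_one]
    have hsl1 : s ^ (l + 1) = s ^ l * s := by
      rw [Real.rpow_add hs, Real.rpow_one]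
    have hsl1' : l + 1 - 1 = l := by ring
    simp only [hD]
    rw [aux_pow_sub (N - 1) s hsne, hcast, hsl1, hsl1', radLap, ← hca]
    field_simp
    ring
  have hDnn : ∀ s : ℝ, 0 < s → s ≤ r₀ → 0 ≤ D s := by
    intro s hs hsr
    rw [hDeq s hs]
    have hga : a ≤ g s := hg (Set.mem_Ici.mpr hs.le) (Set.mem_Ici.mpr hr₀) hsr
    have h1 : s ^ l * a ≤ s ^ l * g s := by
      apply mul_le_mul_of_nonneg_left hga (Real.rpow_nonneg hs.le l)
    have h2 : s ^ l * g s ≤ radLap N ξ s := h s hs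
    have h3 : (0:ℝ) ≤ s ^ (N - 1) := pow_nonneg hs.le _
    nlinarith
  have hFmono : MonotoneOn F (Set.Ioc 0 r₀) := by
    apply monotoneOn_of_deriv_nonneg (convex_Ioc _ _)
    · exact fun s hs => ((hFd s hs.1).continuousAt).continuousWithinAt
    · rw [interior_Ioc]
      exact fun s hs => ((hFd s hs.1).differentiableAt).differentiableWithinAt
    · rw [interior_Ioc]
      intro s hs
      rw [(hFd s hs.1).deriv]
      exact hDnn s hs.1 hs.2.le
  have hlim : Filter.Tendsto F (nhdsWithin 0 (Set.Ioi 0)) (nhds 0) := by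
    have h1 : Filter.Tendsto (fun s : ℝ => s ^ (N - 1)) (nhdsWithin 0 (Set.Ioi 0))
        (nhds ((0:ℝ) ^ (N - 1))) :=
      ((continuous_pow (N - 1)).continuousAt.tendsto).mono_left nhdsWithin_le_nhds
    have h2 : Filter.Tendsto (fun s : ℝ => deriv ξ s - c * (l + 2) * s ^ (l + 1))
        (nhdsWithin 0 (Set.Ioi 0)) (nhds 0) := by
      have h2a : Filter.Tendsto (deriv ξ) (nhdsWithin 0 (Set.Ioi 0)) (nhds 0) := by
        have := (hξ'.continuous.tendsto 0).mono_left
          (nhdsWithin_le_nhds (s := Set.Ioi (0:ℝ)))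
        rwa [hξ0] at this
      have h2b : Filter.Tendsto (fun s : ℝ => s ^ (l + 1)) (nhdsWithin 0 (Set.Ioi 0))
          (nhds 0) := by
        have := ((Real.continuousAt_rpow_const 0 (l + 1)
          (Or.inr (by linarith))).tendsto).mono_left
          (nhdsWithin_le_nhds (s := Set.Ioi (0:ℝ)))
        rwa [Real.zero_rpow (by linarith : l + 1 ≠ 0)] at this
      have := h2a.sub ((h2b.const_mul (c * (l + 2))))
      simpa using this
    have := h1.mul h2
    simpa using this
  have hFnn : ∀ r : ℝ, 0 < r → r ≤ r₀ → 0 ≤ F r := by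
    intro r hr hrr
    refine le_of_tendsto hlim ?_
    filter_upwards [Ioo_mem_nhdsGT_of_mem (Set.mem_Ico.mpr ⟨le_refl 0, hr⟩)] with s hs
    exact hFmono ⟨hs.1, hs.2.le.trans hrr⟩ ⟨hr, hrr⟩ hs.2.le
  have hud : ∀ x : ℝ, 0 < x →
      HasDerivAt (fun t : ℝ => ξ t - c * t ^ (l + 2))
        (deriv ξ x - c * ((l + 2) * x ^ (l + 1))) x := by
    intro x hx
    have h1 : HasDerivAt (fun t : ℝ => t ^ (l + 2)) ((l + 2) * x ^ (l + 2 - 1)) x :=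
      Real.hasDerivAt_rpow_const (Or.inl (ne_of_gt hx))
    have h2 : l + 2 - 1 = l + 1 := by ring
    rw [h2] at h1
    exact ((hd1 x).hasDerivAt).sub (h1.const_mul c)
  have humono : MonotoneOn (fun t : ℝ => ξ t - c * t ^ (l + 2)) (Set.Icc 0 r₀) := by
    apply monotoneOn_of_deriv_nonneg (convex_Icc _ _)
    · apply ContinuousOn.sub (hd1.continuous.continuousOn)
      apply ContinuousOn.mul continuousOn_const
      exact fun t _ => (Real.continuousAt_rpow_const t (l + 2)
        (Or.inr hl2.le)).continuousWithinAt
    · rw [interior_Icc]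
      exact fun x hx => ((hud x hx.1).differentiableAt).differentiableWithinAt
    · rw [interior_Icc]
      intro x hx
      rw [(hud x hx.1).deriv]
      have hFx := hFnn x hx.1 hx.2.le
      have hpow : (0:ℝ) < x ^ (N - 1) := pow_pos hx.1 _
      have : 0 ≤ deriv ξ x - c * (l + 2) * x ^ (l + 1) :=
        (mul_nonneg_iff_of_pos_left hpow).mp hFx
      linarith [this]
  have hfin : (fun t : ℝ => ξ t - c * t ^ (l + 2)) 0 ≤
      (fun t : ℝ => ξ t - c * t ^ (l + 2)) r₀ :=
    humono (Set.mem_Icc.mpr ⟨le_refl 0, hr₀⟩) (Set.mem_Icc.mpr ⟨hr₀, le_refl r₀⟩) hr₀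
  simp only [Real.zero_rpow (by positivity : l + 2 ≠ 0), mul_zero, sub_zero] at hfin
  have hcr : c * r₀ ^ (l + 2) = r₀ ^ (l + 2) * a / (((N:ℝ) + l) * (l + 2)) := by
    rw [hc]; ring
  rw [ge_iff_le]
  rw [hcr] at hfin
  linarith
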